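/- Define the singular series 𝔖(D) for a finite set D of integers as the (convergent) product over all primes p of (1 - 1/p)^{-k}(1 - ν_p(D)/p), where k = card D and ν_p(D) is the number of distinct residue classes mod p among the elements of D. If all elements of D lie in [1, h] with h ≥ 2, then 𝔖(D) = O_k((log h)^{k-1}). -/

import Mathlib

open Finset Nat

lemma cheb (n : ℕ) : ∑ p ∈ primesBelow (n+1), Real.log p ≤ n * Real.log 4 := by
  have h1 : (primorial n : ℝ) ≤ (4:ℝ)^n := by exact_mod_cast primorial_le_4_pow n
  have h2 : Real.log (primorial n) ≤ n * Real.log 4 := by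
    calc Real.log (primorial n) ≤ Real.log ((4:ℝ)^n) :=
          Real.log_le_log (by exact_mod_cast (primorial_pos n)) h1
      _ = n * Real.log 4 := by rw [Real.log_pow]
  have h3 : Real.log (primorial n) = ∑ p ∈ primesBelow (n+1), Real.log p := by
    rw [primorial]
    have : (↑(∏ p ∈ range (n + 1) with p.Prime, p) : ℝ)
        = ∏ p ∈ primesBelow (n+1), (p:ℝ) := by
      rw [primesBelow]; push_cast; rfl
    rw [this, Real.log_prod]
    intro p hp
    exact_mod_cast (prime_of_mem_primesBelow hp).pos.ne'
  linarith [h3 ▸ h2]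

-- Legendre-type: n/p ≤ factorization of n! at p
lemma floor_le_fact (p n : ℕ) (hp : p.Prime) : n / p ≤ (n !).factorization p := by
  rw [← hp.pow_dvd_iff_le_factorization (factorial_ne_zero n)]
  rw [hp.pow_dvd_factorial_iff (lt_succ_self _)]
  rcases le_or_gt p n with h | h
  · calc n / p = n / p ^ 1 := by rw [pow_one]
      _ ≤ ∑ i ∈ Ico 1 (Nat.log p n + 1), n / p ^ i := by
          apply Finset.single_le_sum (f := fun i => n / p ^ i)
          · intro i _; positivity
          · simp only [mem_Ico]
            refine ⟨le_refl 1, ?_⟩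
            have hl : Nat.log p n ≠ 0 := by
              simp only [ne_eq, Nat.log_eq_zero_iff, not_or, not_lt]
              exact ⟨h, not_le_of_gt hp.one_lt⟩
            omega
  · simp [Nat.div_eq_of_lt h]

-- M := ∏ p^(n/p) divides n!
lemma M_dvd (n : ℕ) : (∏ p ∈ primesBelow (n+1), p ^ (n / p)) ∣ n ! := by
  rw [← Nat.factorization_le_iff_dvd _ (factorial_ne_zero n)]
  · rw [Nat.factorization_prod]
    · intro q
      rw [Finsupp.finset_sum_apply]
      have : ∀ p ∈ primesBelow (n+1), ((p ^ (n / p)).factorization) q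
          = if p = q then n / p else 0 := by
        intro p hp
        rw [(prime_of_mem_primesBelow hp).factorization_pow, Finsupp.single_apply]
      rw [Finset.sum_congr rfl this, Finset.sum_ite_eq']
      by_cases hq : q ∈ primesBelow (n+1)
      · simpa [hq] using floor_le_fact q n (prime_of_mem_primesBelow hq)
      · simp [hq]
    · intro p hp
      exact pow_ne_zero _ (prime_of_mem_primesBelow hp).pos.ne'
  · apply Finset.prod_ne_zero_iff.2
    intro p hp
    exact pow_ne_zero _ (prime_of_mem_primesBelow hp).pos.ne'

lemma log_factorial_le (n : ℕ) : Real.log (n !) ≤ n * Real.log n := by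
  calc Real.log (n !) ≤ Real.log ((n:ℝ)^n) := by
        apply Real.log_le_log (by exact_mod_cast n.factorial_pos)
        exact_mod_cast Nat.factorial_le_pow n
    _ = n * Real.log n := by rw [Real.log_pow]

-- Mertens 1st (upper bound)
lemma mertens1 (n : ℕ) (hn : 1 ≤ n) :
    ∑ p ∈ primesBelow (n+1), Real.log p / p ≤ Real.log n + Real.log 4 := by
  have hM : Real.log (∏ p ∈ primesBelow (n+1), (p:ℝ) ^ (n / p)) ≤ Real.log (n !) := by
    apply Real.log_le_log
    · apply Finset.prod_pos
      intro p hp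
      exact pow_pos (by exact_mod_cast (prime_of_mem_primesBelow hp).pos) _
    · exact_mod_cast Nat.le_of_dvd n.factorial_pos (M_dvd n)
  rw [Real.log_prod (fun p hp => by
      exact pow_ne_zero _ (by exact_mod_cast (prime_of_mem_primesBelow hp).pos.ne'))] at hM
  simp only [Real.log_pow] at hM
  have key : ∀ p ∈ primesBelow (n+1), (n:ℝ) * (Real.log p / p)
      ≤ (↑(n / p) : ℝ) * Real.log p + Real.log p := by
    intro p hp
    have hpp := prime_of_mem_primesBelow hp
    have hp0 : (0:ℝ) < p := by exact_mod_cast hpp.pos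
    have hlog : 0 ≤ Real.log p := Real.log_natCast_nonneg p
    have hfloor : (n:ℝ) / p ≤ (↑(n / p) : ℝ) + 1 := by
      have h1 := Nat.div_add_mod n p
      have h2 := Nat.mod_lt n hpp.pos
      rw [div_le_iff₀ hp0]
      have hr : (n/p+1)*p = p*(n/p)+p := by ring
      have : n < (n / p + 1) * p := by omega
      calc (n:ℝ) ≤ ((n/p + 1) * p : ℕ) := by exact_mod_cast this.le
        _ = ((n/p : ℕ) + 1) * (p:ℝ) := by push_cast; ring
    calc (n:ℝ) * (Real.log p / p) = ((n:ℝ)/p) * Real.log p := by ring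
      _ ≤ ((↑(n / p) : ℝ) + 1) * Real.log p := by
          apply mul_le_mul_of_nonneg_right hfloor hlog
      _ = (↑(n / p) : ℝ) * Real.log p + Real.log p := by ring
  have h2 : (n:ℝ) * ∑ p ∈ primesBelow (n+1), Real.log p / p
      ≤ ∑ p ∈ primesBelow (n+1), ((n/p : ℕ) : ℝ) * Real.log p
        + ∑ p ∈ primesBelow (n+1), Real.log p := by
    rw [Finset.mul_sum, ← Finset.sum_add_distrib]
    exact Finset.sum_le_sum key
  have h3 := cheb n
  have hn0 : (0:ℝ) < n := by exact_mod_cast hn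
  have := h2.trans (by linarith [log_factorial_le n] :
    ∑ p ∈ primesBelow (n+1), ((n/p : ℕ) : ℝ) * Real.log p
        + ∑ p ∈ primesBelow (n+1), Real.log p ≤ (n:ℝ) * Real.log n + n * Real.log 4)
  nlinarith [this]

lemma ite_sum_eq (f : ℕ → ℝ) (n : ℕ) :
    ∑ m ∈ Icc 2 n, (if m.Prime then f m else 0) = ∑ p ∈ primesBelow (n+1), f p := by
  rw [primesBelow, Finset.sum_filter]
  apply Finset.sum_subset
  · intro m hm; simp only [mem_Icc] at hm; simp only [mem_range]; omega
  · intro m hm hm2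
    simp only [mem_range] at hm; simp only [mem_Icc, not_and, not_le] at hm2
    have : ¬ m.Prime := by
      intro hp; have := hp.two_le; have := hm2 hp.two_le; omega
    simp [this]

noncomputable def Sp (n : ℕ) : ℝ := ∑ m ∈ Icc 2 n, (if m.Prime then 1/(m:ℝ) else 0)
noncomputable def Ap (n : ℕ) : ℝ := ∑ m ∈ Icc 2 n, (if m.Prime then Real.log m / m else 0)

lemma Ap_le (n : ℕ) (hn : 1 ≤ n) : Ap n ≤ Real.log n + Real.log 4 := by
  rw [Ap, ite_sum_eq]
  exact mertens1 n hn

lemma abelSum (n : ℕ) (hn : 2 ≤ n) :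
    Sp n ≤ Ap n / Real.log n + Real.log (Real.log n)
      + Real.log 4 * (1/Real.log 2 - 1/Real.log n) - Real.log (Real.log 2) := by
  induction n, hn using Nat.le_induction with
  | base =>
      have h2 : Real.log 2 ≠ 0 := by positivity
      rw [Sp, Ap]
      rw [show Icc 2 2 = {2} from rfl]
      simp only [Finset.sum_singleton, if_pos Nat.prime_two]
      push_cast
      rw [sub_self, mul_zero]
      have e : Real.log 2 / 2 / Real.log 2 = 1/2 := by field_simp
      rw [e]; linarith
  | succ n hn ih =>
      have hL2 : (0:ℝ) < Real.log 2 := Real.log_pos (by norm_num)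
      have hL : (0:ℝ) < Real.log n := by
        apply Real.log_pos; exact_mod_cast by omega
      have hLL : Real.log n ≤ Real.log ((n:ℝ)+1) := by
        apply Real.log_le_log (by positivity)
        linarith
      have hL' : (0:ℝ) < Real.log ((n:ℝ)+1) := lt_of_lt_of_le hL hLL
      have hstep : Sp (n+1) = Sp n + (if (n+1).Prime then 1/((n+1:ℕ):ℝ) else 0) := by
        rw [Sp, Sp, Finset.sum_Icc_succ_top (by omega)]
      have hstepA : Ap (n+1) = Ap n + (if (n+1).Prime then Real.log (n+1:ℕ) / (n+1:ℕ) else 0) := by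
        rw [Ap, Ap, Finset.sum_Icc_succ_top (by omega)]
      set u : ℝ := (if (n+1).Prime then Real.log (n+1:ℕ) / (n+1:ℕ) else 0) with hu
      have htu : (if (n+1).Prime then 1/((n+1:ℕ):ℝ) else 0) = u / Real.log ((n:ℝ)+1) := by
        by_cases hp : (n+1).Prime
        · rw [hu, if_pos hp, if_pos hp]
          push_cast
          rw [div_div, mul_comm, ← div_div, div_self hL'.ne']
        · simp [hu, hp]
      have hA : Ap n ≤ Real.log n + Real.log 4 := Ap_le n (by omega)
      have hd : 0 ≤ 1/Real.log n - 1/Real.log ((n:ℝ)+1) := by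
        rw [sub_nonneg]
        exact one_div_le_one_div_of_le hL hLL
      have hconc : (Real.log ((n:ℝ)+1) - Real.log n)/Real.log ((n:ℝ)+1)
          ≤ Real.log (Real.log ((n:ℝ)+1)) - Real.log (Real.log n) := by
        have h1 := Real.log_le_sub_one_of_pos
          (show (0:ℝ) < Real.log n / Real.log ((n:ℝ)+1) by positivity)
        rw [Real.log_div hL.ne' hL'.ne'] at h1
        have h2 : Real.log n / Real.log ((n:ℝ)+1) - 1
            = -((Real.log ((n:ℝ)+1) - Real.log n)/Real.log ((n:ℝ)+1)) := by
          field_simp; ring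
        linarith
      have hkey : (Ap n - Real.log 4) * (1/Real.log n - 1/Real.log ((n:ℝ)+1))
          ≤ Real.log (Real.log ((n:ℝ)+1)) - Real.log (Real.log n) := by
        calc (Ap n - Real.log 4) * (1/Real.log n - 1/Real.log ((n:ℝ)+1))
            ≤ Real.log n * (1/Real.log n - 1/Real.log ((n:ℝ)+1)) :=
              mul_le_mul_of_nonneg_right (by linarith) hd
          _ = (Real.log ((n:ℝ)+1) - Real.log n)/Real.log ((n:ℝ)+1) := by
              field_simp
          _ ≤ _ := hconc
      rw [hstep, htu, hstepA]
      push_cast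
      have hsplit : (Ap n + u)/Real.log ((n:ℝ)+1)
          = Ap n/Real.log ((n:ℝ)+1) + u/Real.log ((n:ℝ)+1) := by ring
      have heq : Ap n/Real.log n - Real.log 4*(1/Real.log n)
          - (Ap n/Real.log ((n:ℝ)+1) - Real.log 4*(1/Real.log ((n:ℝ)+1)))
          = (Ap n - Real.log 4)*(1/Real.log n - 1/Real.log ((n:ℝ)+1)) := by ring
      linarith [ih, hkey, hsplit, heq]

lemma tele (h : ℕ) (hh : 2 ≤ h) :
    ∑ m ∈ Icc 2 h, 1/((m:ℝ)*((m:ℝ)-1)) = 1 - 1/(h:ℝ) := by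
  induction h, hh using Nat.le_induction with
  | base => norm_num
  | succ n hn ih =>
      rw [Finset.sum_Icc_succ_top (by omega), ih]
      have hn0 : (0:ℝ) < n := by exact_mod_cast by omega
      push_cast
      field_simp
      rw [add_sub_cancel_right, div_self hn0.ne']; ring

noncomputable def Cm : ℝ := 2 + 2*Real.log 4/Real.log 2 - Real.log (Real.log 2)

lemma sum_log_le (h : ℕ) (hh : 2 ≤ h) :
    ∑ p ∈ primesBelow (h+1), Real.log ((1 - (p:ℝ)⁻¹)⁻¹)
      ≤ Real.log (Real.log h) + Cm := by
  have hL2 : (0:ℝ) < Real.log 2 := Real.log_pos (by norm_num)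
  have hLh : Real.log 2 ≤ Real.log h := by
    apply Real.log_le_log (by norm_num); exact_mod_cast hh
  have hLh0 : (0:ℝ) < Real.log h := lt_of_lt_of_le hL2 hLh
  -- termwise bound
  have hterm : ∀ p ∈ primesBelow (h+1),
      Real.log ((1 - (p:ℝ)⁻¹)⁻¹) ≤ 1/(p:ℝ) + 1/((p:ℝ)*((p:ℝ)-1)) := by
    intro p hp
    have hp2 : (2:ℝ) ≤ p := by exact_mod_cast (prime_of_mem_primesBelow hp).two_le
    have hp0 : (0:ℝ) < p := by linarith
    have h1 : (0:ℝ) < 1 - (p:ℝ)⁻¹ := by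
      rw [sub_pos, inv_lt_one_iff₀]; right; linarith
    have h3 := Real.log_le_sub_one_of_pos (inv_pos.2 h1)
    have hne1 : (p:ℝ) - 1 ≠ 0 := by linarith
    have hne0 : (p:ℝ) ≠ 0 := by linarith
    have h4 : (1 - (p:ℝ)⁻¹)⁻¹ - 1 = 1/(p:ℝ) + 1/((p:ℝ)*((p:ℝ)-1)) := by
      rw [show (1 - (p:ℝ)⁻¹) = ((p:ℝ)-1)/p by field_simp]
      rw [inv_div]
      field_simp
      ring
    linarith
  calc ∑ p ∈ primesBelow (h+1), Real.log ((1 - (p:ℝ)⁻¹)⁻¹)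
      ≤ ∑ p ∈ primesBelow (h+1), (1/(p:ℝ) + 1/((p:ℝ)*((p:ℝ)-1))) :=
        Finset.sum_le_sum hterm
    _ = Sp h + ∑ p ∈ primesBelow (h+1), 1/((p:ℝ)*((p:ℝ)-1)) := by
        rw [Finset.sum_add_distrib, Sp, ite_sum_eq]
    _ ≤ Sp h + ∑ m ∈ Icc 2 h, 1/((m:ℝ)*((m:ℝ)-1)) := by
        have hle : ∑ p ∈ primesBelow (h+1), 1/((p:ℝ)*((p:ℝ)-1))
            ≤ ∑ m ∈ Icc 2 h, 1/((m:ℝ)*((m:ℝ)-1)) := by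
          rw [← ite_sum_eq (fun m => 1/((m:ℝ)*((m:ℝ)-1))) h]
          apply Finset.sum_le_sum
          intro m hm
          simp only [mem_Icc] at hm
          have hm0 : (0:ℝ) < m := by exact_mod_cast by omega
          have hm1 : (1:ℝ) < m := by exact_mod_cast by omega
          by_cases hmp : m.Prime
          · simp [hmp]
          · simp only [if_neg hmp]
            apply div_nonneg one_pos.le (by nlinarith)
        linarith [hle]
    _ ≤ Sp h + 1 := by
        rw [tele h hh]
        have : (0:ℝ) < h := by exact_mod_cast by omega
        have : 0 < 1/(h:ℝ) := by positivity
        linarith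
    _ ≤ Real.log (Real.log h) + Cm := by
        have habel := abelSum h hh
        have hAp : Ap h ≤ Real.log h + Real.log 4 := Ap_le h (by omega)
        have h4 : (0:ℝ) < Real.log 4 := Real.log_pos (by norm_num)
        have e1 : Ap h / Real.log h ≤ 1 + Real.log 4 / Real.log 2 := by
          rw [div_le_iff₀ hLh0]
          have : Real.log 4 / Real.log 2 * Real.log h ≥ Real.log 4 := by
            rw [ge_iff_le, div_mul_eq_mul_div, le_div_iff₀ hL2]
            nlinarith
          nlinarith
        have e2 : Real.log 4 * (1/Real.log 2 - 1/Real.log h) ≤ Real.log 4 / Real.log 2 := by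
          have hq : 0 < Real.log 4 / Real.log h := by positivity
          rw [mul_sub, mul_one_div, mul_one_div]
          linarith
        rw [Cm]
        have hr : 2*Real.log 4/Real.log 2 = Real.log 4/Real.log 2 + Real.log 4/Real.log 2 := by
          ring
        linarith

lemma mertens3 (h : ℕ) (hh : 2 ≤ h) :
    ∏ p ∈ primesBelow (h+1), (1 - (p:ℝ)⁻¹)⁻¹ ≤ Real.exp Cm * Real.log h := by
  have hL2 : (0:ℝ) < Real.log 2 := Real.log_pos (by norm_num)
  have hLh : Real.log 2 ≤ Real.log h := by
    apply Real.log_le_log (by norm_num); exact_mod_cast hh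
  have hLh0 : (0:ℝ) < Real.log h := lt_of_lt_of_le hL2 hLh
  have hpos : ∀ p ∈ primesBelow (h+1), (0:ℝ) < (1 - (p:ℝ)⁻¹)⁻¹ := by
    intro p hp
    have hp2 : (2:ℝ) ≤ p := by exact_mod_cast (prime_of_mem_primesBelow hp).two_le
    have : (0:ℝ) < 1 - (p:ℝ)⁻¹ := by
      rw [sub_pos, inv_lt_one_iff₀]; right; linarith
    positivity
  have hprodpos : (0:ℝ) < ∏ p ∈ primesBelow (h+1), (1 - (p:ℝ)⁻¹)⁻¹ :=
    Finset.prod_pos hpos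
  rw [← Real.exp_log hprodpos,
    Real.log_prod (fun p hp => (hpos p hp).ne')]
  calc Real.exp (∑ p ∈ primesBelow (h+1), Real.log ((1 - (p:ℝ)⁻¹)⁻¹))
      ≤ Real.exp (Real.log (Real.log h) + Cm) := Real.exp_le_exp.2 (by
        have := sum_log_le h hh; linarith)
    _ = Real.exp Cm * Real.log h := by
        rw [Real.exp_add, Real.exp_log hLh0]; ring

theorem stmt_6 (k : ℕ) :
    ∃ C : ℝ, ∀ h : ℕ, 2 ≤ h → ∀ D : Finset ℤ, D.card = k →
      (∀ d ∈ D, 1 ≤ d ∧ d ≤ (h : ℤ)) →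
      |∏' p : Nat.Primes, (1 - ((p : ℕ) : ℝ)⁻¹)⁻¹ ^ k *
          (1 - ((D.image fun d : ℤ => (d : ZMod (p : ℕ))).card : ℝ) / ((p : ℕ) : ℝ))| ≤
        C * Real.log h ^ (k - 1) := by
  classical
  refine ⟨(Real.exp Cm)^(k-1) + ((Real.log 2)⁻¹)^(k-1), ?_⟩
  intro h hh D hcard hD
  have hL2 : (0:ℝ) < Real.log 2 := Real.log_pos (by norm_num)
  have hLh : Real.log 2 ≤ Real.log h :=
    Real.log_le_log (by norm_num) (by exact_mod_cast hh)
  have hLh0 : (0:ℝ) < Real.log h := lt_of_lt_of_le hL2 hLh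
  have hLhpow : (0:ℝ) ≤ Real.log h ^ (k-1) := by positivity
  have hone : (1:ℝ) ≤ ((Real.log 2)⁻¹)^(k-1) * Real.log h ^ (k-1) := by
    rw [← mul_pow]
    apply one_le_pow₀
    rw [inv_mul_eq_div, one_le_div hL2]
    exact hLh
  have hexpow : (0:ℝ) ≤ (Real.exp Cm)^(k-1) * Real.log h ^ (k-1) := by positivity
  rcases Nat.eq_zero_or_pos k with rfl | hk1
  · have hD0 : D = ∅ := Finset.card_eq_zero.mp hcard
    have hf1 : (fun p : Nat.Primes => (1 - ((p : ℕ) : ℝ)⁻¹)⁻¹ ^ 0 *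
        (1 - ((D.image fun d : ℤ => (d : ZMod ((p:ℕ)))).card : ℝ) / ((p : ℕ) : ℝ)))
        = fun _ => 1 := by
      funext p
      simp [hD0]
    rw [hf1, tprod_one, abs_one]
    simp only [Nat.zero_sub, pow_zero] at *
    linarith
  · have hDne : D.Nonempty := Finset.card_pos.mp (hcard ▸ hk1)
    set G : ℕ → ℝ := fun n => if n ≤ h then (1 - (n:ℝ)⁻¹)⁻¹ ^ (k-1) else 1 with hG
    -- pointwise bounds
    have key : ∀ p : Nat.Primes,
        0 ≤ (1 - ((p:ℕ):ℝ)⁻¹)⁻¹ ^ k *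
            (1 - ((D.image fun d : ℤ => (d : ZMod ((p:ℕ)))).card : ℝ) / ((p:ℕ):ℝ))
        ∧ (1 - ((p:ℕ):ℝ)⁻¹)⁻¹ ^ k *
            (1 - ((D.image fun d : ℤ => (d : ZMod ((p:ℕ)))).card : ℝ) / ((p:ℕ):ℝ))
          ≤ G (p:ℕ) := by
      intro p
      have hq : (p:ℕ).Prime := p.2
      set q : ℕ := (p:ℕ) with hqdef
      set ν : ℕ := (D.image fun d : ℤ => (d : ZMod q)).card with hν
      have hq2 : 2 ≤ q := hq.two_le
      have hqR : (2:ℝ) ≤ q := by exact_mod_cast hq2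
      have hq0R : (0:ℝ) < q := by linarith
      have hbase : (0:ℝ) < 1 - (q:ℝ)⁻¹ := by
        rw [sub_pos, inv_lt_one_iff₀]; right; linarith
      set c : ℝ := (1 - (q:ℝ)⁻¹)⁻¹ with hc
      have hc0 : 0 < c := by positivity
      have hc1 : 1 ≤ c := by
        rw [hc, one_le_inv_iff₀]
        constructor
        · exact hbase
        · have : (0:ℝ) ≤ (q:ℝ)⁻¹ := by positivity
          linarith
      have hν1 : 1 ≤ ν := Finset.card_pos.mpr (hDne.image _)
      have hνk : ν ≤ k := hcard ▸ Finset.card_image_le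
      haveI : NeZero q := ⟨hq.pos.ne'⟩
      have hνq : ν ≤ q := le_trans (Finset.card_le_univ _) (le_of_eq (ZMod.card q))
      have hnonneg : 0 ≤ 1 - (ν:ℝ)/q := by
        rw [sub_nonneg, div_le_one hq0R]
        exact_mod_cast hνq
      have hbern : 1 - (ν:ℝ)/q ≤ (1 - (q:ℝ)⁻¹)^ν := by
        have hb := one_add_mul_le_pow (a := -(q:ℝ)⁻¹) (by
          have : (0:ℝ) ≤ (q:ℝ)⁻¹ := by positivity
          have : (q:ℝ)⁻¹ ≤ 1 := by
            rw [inv_le_one_iff₀]; right; linarith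
          linarith) ν
        have e1 : (1 + -(q:ℝ)⁻¹) = 1 - (q:ℝ)⁻¹ := by ring
        have e2 : 1 + (ν:ℝ) * (-(q:ℝ)⁻¹) = 1 - (ν:ℝ)/q := by
          rw [div_eq_mul_inv]; ring
        rw [e1, e2] at hb
        exact hb
      have hcinv : c⁻¹ = 1 - (q:ℝ)⁻¹ := by rw [hc, inv_inv]
      have hcne : c ≠ 0 := hc0.ne'
      have hsplit : c^(k-ν) * c^ν = c^k := by rw [← pow_add, Nat.sub_add_cancel hνk]
      have hm1 : c * (1 - (q:ℝ)⁻¹) = 1 := inv_mul_cancel₀ hbase.ne'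
      have hpowinv : c^k * (1 - (q:ℝ)⁻¹)^ν = c^(k-ν) := by
        calc c^k * (1 - (q:ℝ)⁻¹)^ν = c^(k-ν) * (c * (1 - (q:ℝ)⁻¹))^ν := by
              rw [mul_pow, ← hsplit]; ring
          _ = c^(k-ν) := by rw [hm1, one_pow, mul_one]
      have hfle : c^k * (1 - (ν:ℝ)/q) ≤ c^(k-ν) := by
        calc c^k * (1 - (ν:ℝ)/q) ≤ c^k * (1 - (q:ℝ)⁻¹)^ν :=
              mul_le_mul_of_nonneg_left hbern (by positivity)
          _ = c^(k-ν) := hpowinv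
      constructor
      · exact mul_nonneg (by positivity) hnonneg
      · rw [hG]
        by_cases hqh : q ≤ h
        · simp only [if_pos hqh]
          calc c^k * (1 - (ν:ℝ)/q) ≤ c^(k-ν) := hfle
            _ ≤ c^(k-1) := pow_le_pow_right₀ hc1 (by omega)
        · simp only [if_neg hqh]
          have hinj : Set.InjOn (fun d : ℤ => (d : ZMod q)) D := by
            intro a ha b hb hab
            have hmod := (ZMod.intCast_eq_intCast_iff a b q).mp hab
            have hdvd : (q:ℤ) ∣ b - a := Int.ModEq.dvd hmod
            have habs : b - a = 0 := by
              apply Int.eq_zero_of_abs_lt_dvd hdvd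
              obtain ⟨ha1, ha2⟩ := hD a ha
              obtain ⟨hb1, hb2⟩ := hD b hb
              have hq' : (h:ℤ) < (q:ℤ) := by exact_mod_cast Nat.lt_of_not_le hqh
              rw [abs_lt]
              omega
            omega
          have hνeq : ν = k := by
            rw [hν, Finset.card_image_of_injOn (by exact_mod_cast hinj), hcard]
          calc c^k * (1 - (ν:ℝ)/q) ≤ c^(k-ν) := hfle
            _ = 1 := by rw [hνeq, Nat.sub_self, pow_zero]
    -- bound for partial products
    have hGone : ∀ n : ℕ, n.Prime → 1 ≤ G n := by
      intro n hn
      rw [hG]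
      by_cases hnh : n ≤ h
      · simp only [if_pos hnh]
        apply one_le_pow₀
        have hn2 : (2:ℝ) ≤ n := by exact_mod_cast hn.two_le
        have hbase : (0:ℝ) < 1 - (n:ℝ)⁻¹ := by
          rw [sub_pos, inv_lt_one_iff₀]; right; linarith
        rw [one_le_inv_iff₀]
        refine ⟨hbase, ?_⟩
        have : (0:ℝ) ≤ (n:ℝ)⁻¹ := by positivity
        linarith
      · simp only [if_neg hnh]; exact le_refl 1
    have hpartial : ∀ s : Finset Nat.Primes,
        ∏ p ∈ s, ((1 - ((p:ℕ):ℝ)⁻¹)⁻¹ ^ k *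
          (1 - ((D.image fun d : ℤ => (d : ZMod ((p:ℕ)))).card : ℝ) / ((p:ℕ):ℝ)))
        ≤ (Real.exp Cm)^(k-1) * Real.log h ^ (k-1) := by
      intro s
      have step1 : ∏ p ∈ s, ((1 - ((p:ℕ):ℝ)⁻¹)⁻¹ ^ k *
          (1 - ((D.image fun d : ℤ => (d : ZMod ((p:ℕ)))).card : ℝ) / ((p:ℕ):ℝ)))
          ≤ ∏ p ∈ s, G (p:ℕ) :=
        Finset.prod_le_prod (fun p _ => (key p).1) (fun p _ => (key p).2)
      have step2 : ∏ p ∈ s, G (p:ℕ) = ∏ n ∈ s.image (fun p : Nat.Primes => (p:ℕ)), G n :=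
        (Finset.prod_image (fun x _ y _ e => Subtype.ext e)).symm
      set t : Finset ℕ := (s.image (fun p : Nat.Primes => (p:ℕ))).filter (· ≤ h) with ht
      have step3 : ∏ n ∈ s.image (fun p : Nat.Primes => (p:ℕ)), G n = ∏ n ∈ t, G n := by
        symm
        apply Finset.prod_subset (Finset.filter_subset _ _)
        intro n hn hnt
        simp only [ht, Finset.mem_filter] at hnt
        have : ¬ n ≤ h := fun hc => hnt ⟨hn, hc⟩
        rw [hG]; simp only [if_neg this]
      have htsub : t ⊆ primesBelow (h+1) := by
        intro n hn
        simp only [ht, Finset.mem_filter, Finset.mem_image] at hn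
        obtain ⟨⟨p, _, rfl⟩, hnh⟩ := hn
        rw [mem_primesBelow]
        exact ⟨by omega, p.2⟩
      have hprime_t : ∀ n ∈ t, n.Prime := by
        intro n hn
        exact prime_of_mem_primesBelow (htsub hn)
      have step4 : ∏ n ∈ t, G n ≤ ∏ n ∈ primesBelow (h+1), G n := by
        rw [← Finset.prod_sdiff htsub]
        apply le_mul_of_one_le_left
        · apply Finset.prod_nonneg
          intro n hn
          exact le_trans zero_le_one (hGone n (hprime_t n hn))
        · calc (1:ℝ) = ∏ _n ∈ primesBelow (h+1) \ t, 1 := (Finset.prod_const_one).symm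
            _ ≤ ∏ n ∈ primesBelow (h+1) \ t, G n :=
              Finset.prod_le_prod (fun _ _ => zero_le_one)
                (fun n hn => hGone n (prime_of_mem_primesBelow (Finset.mem_sdiff.mp hn).1))
      have step5 : ∏ n ∈ primesBelow (h+1), G n
          = (∏ n ∈ primesBelow (h+1), (1 - (n:ℝ)⁻¹)⁻¹) ^ (k-1) := by
        rw [← Finset.prod_pow]
        apply Finset.prod_congr rfl
        intro n hn
        have : n ≤ h := by have := lt_of_mem_primesBelow hn; omega
        rw [hG]; simp only [if_pos this]
      have step6 : (∏ n ∈ primesBelow (h+1), (1 - (n:ℝ)⁻¹)⁻¹) ^ (k-1)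
          ≤ (Real.exp Cm * Real.log h) ^ (k-1) := by
        apply pow_le_pow_left₀ _ (mertens3 h hh)
        apply Finset.prod_nonneg
        intro n hn
        have hn2 : (2:ℝ) ≤ n := by exact_mod_cast (prime_of_mem_primesBelow hn).two_le
        have : (0:ℝ) < 1 - (n:ℝ)⁻¹ := by
          rw [sub_pos, inv_lt_one_iff₀]; right; linarith
        positivity
      calc ∏ p ∈ s, ((1 - ((p:ℕ):ℝ)⁻¹)⁻¹ ^ k *
          (1 - ((D.image fun d : ℤ => (d : ZMod ((p:ℕ)))).card : ℝ) / ((p:ℕ):ℝ)))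
          ≤ ∏ p ∈ s, G (p:ℕ) := step1
        _ = ∏ n ∈ t, G n := by rw [step2, step3]
        _ ≤ ∏ n ∈ primesBelow (h+1), G n := step4
        _ = (∏ n ∈ primesBelow (h+1), (1 - (n:ℝ)⁻¹)⁻¹) ^ (k-1) := step5
        _ ≤ (Real.exp Cm * Real.log h) ^ (k-1) := step6
        _ = (Real.exp Cm)^(k-1) * Real.log h ^ (k-1) := mul_pow _ _ _
    by_cases hmul : Multipliable (fun p : Nat.Primes =>
        (1 - ((p:ℕ):ℝ)⁻¹)⁻¹ ^ k *
          (1 - ((D.image fun d : ℤ => (d : ZMod ((p:ℕ)))).card : ℝ) / ((p:ℕ):ℝ)))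
    · have hub := le_of_tendsto hmul.hasProd (Filter.Eventually.of_forall hpartial)
      have hlb : (0:ℝ) ≤ ∏' p : Nat.Primes, ((1 - ((p:ℕ):ℝ)⁻¹)⁻¹ ^ k *
          (1 - ((D.image fun d : ℤ => (d : ZMod ((p:ℕ)))).card : ℝ) / ((p:ℕ):ℝ))) :=
        ge_of_tendsto hmul.hasProd (Filter.Eventually.of_forall fun s =>
          Finset.prod_nonneg fun p _ => (key p).1)
      rw [abs_of_nonneg hlb]
      calc (∏' p : Nat.Primes, ((1 - ((p:ℕ):ℝ)⁻¹)⁻¹ ^ k *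
          (1 - ((D.image fun d : ℤ => (d : ZMod ((p:ℕ)))).card : ℝ) / ((p:ℕ):ℝ))))
          ≤ (Real.exp Cm)^(k-1) * Real.log h ^ (k-1) := hub
        _ ≤ ((Real.exp Cm)^(k-1) + ((Real.log 2)⁻¹)^(k-1)) * Real.log h ^ (k-1) := by
            have h2 : (0:ℝ) ≤ ((Real.log 2)⁻¹)^(k-1) * Real.log h ^ (k-1) := by positivity
            nlinarith
    · rw [tprod_eq_one_of_not_multipliable hmul, abs_one]
      have : ((Real.exp Cm)^(k-1) + ((Real.log 2)⁻¹)^(k-1)) * Real.log h ^ (k-1)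
          = (Real.exp Cm)^(k-1) * Real.log h ^ (k-1)
            + ((Real.log 2)⁻¹)^(k-1) * Real.log h ^ (k-1) := by ring
      rw [this]
      linarith
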